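/- arXiv:1811.02211 — 2 statements merged into one kernel-verified Lean document; each statement's English description precedes it below -/
import Mathlib

section
/- Let K be a field with char K ≠ 2, and let L be the 3-dimensional Lie algebra over K with basis u, v, w and brackets [u,v] = -2w, [u,w] = u, [v,w] = -v (and [u,u]=[v,v]=[w,w]=0). Then L is isomorphic to sl(2, K); in particular L is not solvable. -/
open LieAlgebra.SpecialLinear in
noncomputable def stmt11E (K : Type*) [Field K] : sl (Fin 2) K := single 0 1 (by decide) (1:K)

open LieAlgebra.SpecialLinear in
noncomputable def stmt11F (K : Type*) [Field K] : sl (Fin 2) K := single 1 0 (by decide) (1:K)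

open LieAlgebra.SpecialLinear in
noncomputable def stmt11H (K : Type*) [Field K] : sl (Fin 2) K := ⁅stmt11E K, stmt11F K⁆

section

variable (K : Type*) [Field K]

lemma stmt11Hval : (stmt11H K).val =
    (stmt11E K).val * (stmt11F K).val - (stmt11F K).val * (stmt11E K).val := rfl

lemma stmt11_FH : ⁅stmt11F K, stmt11H K⁆ = (2 : K) • stmt11F K := by
  apply Subtype.ext
  show ((stmt11F K).val * (stmt11H K).val - (stmt11H K).val * (stmt11F K).val)
    = (2:K) • (stmt11F K).val
  rw [stmt11Hval]
  ext i j
  fin_cases i <;> fin_cases j <;>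
    simp [stmt11E, stmt11F, Matrix.mul_apply, Matrix.single, Fin.sum_univ_two] <;> ring

lemma stmt11_EH : ⁅stmt11E K, stmt11H K⁆ = (-2 : K) • stmt11E K := by
  apply Subtype.ext
  show ((stmt11E K).val * (stmt11H K).val - (stmt11H K).val * (stmt11E K).val)
    = (-2:K) • (stmt11E K).val
  rw [stmt11Hval]
  ext i j
  fin_cases i <;> fin_cases j <;>
    simp [stmt11E, stmt11F, Matrix.mul_apply, Matrix.single, Fin.sum_univ_two] <;> ring

lemma stmt11_FE : ⁅stmt11F K, stmt11H K⁆.val = (2:K) • (stmt11F K).val := by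
  rw [stmt11_FH]; rfl

variable {K}
variable (L : Type*) [LieRing L] [LieAlgebra K L] (u v w : L)

open LieAlgebra.SpecialLinear in
/-- the explicit inverse linear map from `sl(2,K)` to `L` -/
noncomputable def stmt11psi : sl (Fin 2) K →ₗ[K] L where
  toFun A := A.val 1 0 • u + A.val 0 1 • v + (2 * A.val 0 0) • w
  map_add' A B := by
    show ((A.val + B.val) 1 0) • u + ((A.val + B.val) 0 1) • v
        + (2 * (A.val + B.val) 0 0) • w = _
    simp only [Matrix.add_apply, add_smul, mul_add]
    abel
  map_smul' c A := by
    show ((c • A.val) 1 0) • u + ((c • A.val) 0 1) • v + (2 * (c • A.val) 0 0) • w = _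
    simp only [Matrix.smul_apply, smul_eq_mul, RingHom.id_apply, smul_add, smul_smul]
    ring_nf

lemma stmt11psi_apply (A : LieAlgebra.SpecialLinear.sl (Fin 2) K) :
    stmt11psi L u v w A = A.val 1 0 • u + A.val 0 1 • v + (2 * A.val 0 0) • w := rfl

end

set_option maxHeartbeats 1000000 in
set_option synthInstance.maxHeartbeats 400000 in
open LieAlgebra.SpecialLinear in
theorem stmt11_iso (K : Type*) [Field K] (h2 : (2 : K) ≠ 0)
    (L : Type*) [LieRing L] [LieAlgebra K L] (u v w : L)
    (hli : LinearIndependent K ![u, v, w])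
    (hsp : Submodule.span K {u, v, w} = ⊤)
    (huv : ⁅u, v⁆ = (-2 : K) • w) (huw : ⁅u, w⁆ = u) (hvw : ⁅v, w⁆ = -v) :
    Nonempty (L ≃ₗ⁅K⁆ sl (Fin 2) K) := by
  set E := stmt11E K with hEdef
  set F := stmt11F K with hFdef
  set H := stmt11H K with hHdef
  have hFH : ⁅F, H⁆ = (2 : K) • F := stmt11_FH K
  have hEH : ⁅E, H⁆ = (-2 : K) • E := stmt11_EH K
  have hHEF : H = ⁅E, F⁆ := rfl
  have hEval : E.val = Matrix.single 0 1 (1:K) := rfl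
  have hFval : F.val = Matrix.single 1 0 (1:K) := rfl
  have hHval : H.val = E.val * F.val - F.val * E.val := rfl
  clear_value E F H
  have hFE : ⁅F, E⁆ = -H := by rw [hHEF, ← lie_skew]
  have hinv : (2⁻¹ : K) * 2 = 1 := inv_mul_cancel₀ h2
  -- basis of L
  have hrange : Set.range ![u, v, w] = {u, v, w} := by
    ext x
    simp [Fin.exists_fin_two, Matrix.range_cons, Matrix.range_empty]
    tauto
  have hspan' : ⊤ ≤ Submodule.span K (Set.range ![u, v, w]) := by rw [hrange, hsp]
  let b : Module.Basis (Fin 3) K L := Module.Basis.mk hli hspan'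
  have hb : ∀ i, b i = ![u, v, w] i := fun i => Module.Basis.mk_apply hli hspan' i
  have hbu : b 0 = u := by rw [hb 0]; simp
  have hbv : b 1 = v := by rw [hb 1]; simp
  have hbw : b 2 = w := by rw [hb 2]; simp
  set m : Fin 3 → sl (Fin 2) K := ![F, E, (2⁻¹ : K) • H] with hm
  set φ : L →ₗ[K] sl (Fin 2) K := b.constr K m with hφ
  have φu : φ u = F := by rw [← hbu, hφ, b.constr_basis]; rfl
  have φv : φ v = E := by rw [← hbv, hφ, b.constr_basis]; rfl
  have φw : φ w = (2⁻¹ : K) • H := by rw [← hbw, hφ, b.constr_basis]; rfl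
  clear_value m φ b
  -- remaining brackets of L
  have hwu : ⁅w, u⁆ = -u := by rw [← lie_skew, huw]
  have hwv : ⁅w, v⁆ = v := by rw [← lie_skew, hvw, neg_neg]
  have hvu : ⁅v, u⁆ = (2 : K) • w := by rw [← lie_skew, huv, ← neg_smul, neg_neg]
  -- the 9 bracket checks
  have c00 : φ ⁅u, u⁆ = ⁅φ u, φ u⁆ := by simp
  have c11 : φ ⁅v, v⁆ = ⁅φ v, φ v⁆ := by simp
  have c22 : φ ⁅w, w⁆ = ⁅φ w, φ w⁆ := by simp
  have c01 : φ ⁅u, v⁆ = ⁅φ u, φ v⁆ := by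
    rw [φu, φv, hFE, huv, map_smul, φw, smul_smul,
      show (-2 : K) * 2⁻¹ = -1 by field_simp, neg_one_smul]
  have c10 : φ ⁅v, u⁆ = ⁅φ v, φ u⁆ := by
    rw [φu, φv, ← hHEF, hvu, map_smul, φw, smul_smul,
      show (2 : K) * 2⁻¹ = 1 by field_simp, one_smul]
  have c02 : φ ⁅u, w⁆ = ⁅φ u, φ w⁆ := by
    rw [φu, φw, huw, φu, lie_smul, hFH, smul_smul, hinv, one_smul]
  have c20 : φ ⁅w, u⁆ = ⁅φ w, φ u⁆ := by
    rw [φw, hwu, map_neg, φu, smul_lie, ← lie_skew H F, hFH, smul_neg, smul_smul, hinv,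
      one_smul]
  have c12 : φ ⁅v, w⁆ = ⁅φ v, φ w⁆ := by
    rw [φv, φw, hvw, map_neg, φv, lie_smul, hEH, smul_smul,
      show (2⁻¹ : K) * (-2) = -1 by field_simp, neg_one_smul]
  have c21 : φ ⁅w, v⁆ = ⁅φ w, φ v⁆ := by
    rw [φw, hwv, φv, smul_lie, ← lie_skew H E, hEH, smul_neg, smul_smul,
      show (2⁻¹ : K) * (-2) = -1 by field_simp, neg_one_smul, neg_neg]
  -- bracket preservation everywhere, via bilinearity
  have key : ∀ x y : L, φ ⁅x, y⁆ = ⁅φ x, φ y⁆ := by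
    set B1 : L →ₗ[K] L →ₗ[K] sl (Fin 2) K :=
      LinearMap.mk₂ K (fun x y => φ ⁅x, y⁆)
        (fun x x' y => by simp only [add_lie, map_add])
        (fun c x y => by simp only [smul_lie, map_smul])
        (fun x y y' => by simp only [lie_add, map_add])
        (fun c x y => by simp only [lie_smul, map_smul]) with hB1
    set B2 : L →ₗ[K] L →ₗ[K] sl (Fin 2) K :=
      LinearMap.mk₂ K (fun x y => ⁅φ x, φ y⁆)
        (fun x x' y => by simp only [map_add, add_lie])
        (fun c x y => by simp only [map_smul, smul_lie])
        (fun x y y' => by simp only [map_add, lie_add])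
        (fun c x y => by simp only [map_smul, lie_smul]) with hB2
    have hcase : ∀ i j : Fin 3,
        φ ⁅![u, v, w] i, ![u, v, w] j⁆ = ⁅φ (![u, v, w] i), φ (![u, v, w] j)⁆ := by
      intro i j
      fin_cases i <;> fin_cases j
      · exact c00
      · exact c01
      · exact c02
      · exact c10
      · exact c11
      · exact c12
      · exact c20
      · exact c21
      · exact c22
    have hBeq : B1 = B2 := by
      refine b.ext fun i => b.ext fun j => ?_
      have e1 : ∀ x y : L, B1 x y = φ ⁅x, y⁆ := fun x y => rfl
      have e2 : ∀ x y : L, B2 x y = ⁅φ x, φ y⁆ := fun x y => rfl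
      rw [e1, e2, hb i, hb j]
      exact hcase i j
    exact fun x y => LinearMap.congr_fun (LinearMap.congr_fun hBeq x) y
  -- invertibility
  set ψ : sl (Fin 2) K →ₗ[K] L := stmt11psi L u v w with hψ
  have p0 : ψ (φ u) = u := by
    rw [φu, hψ, stmt11psi_apply]
    simp [hFval, Matrix.single]
  have p1 : ψ (φ v) = v := by
    rw [φv, hψ, stmt11psi_apply]
    simp [hEval, Matrix.single]
  have p2 : ψ (φ w) = w := by
    rw [φw, map_smul, hψ, stmt11psi_apply]
    simp [hHval, hEval, hFval, Matrix.mul_apply, Matrix.single, Fin.sum_univ_two,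
      smul_smul, smul_add, hinv]
  have hψφ : ∀ x : L, ψ (φ x) = x := by
    have hpoint : ∀ i : Fin 3,
        ψ.comp φ (![u, v, w] i) = (LinearMap.id : L →ₗ[K] L) (![u, v, w] i) := by
      intro i
      fin_cases i
      · exact p0
      · exact p1
      · exact p2
    have : ψ.comp φ = LinearMap.id := by
      refine b.ext fun i => ?_
      rw [hb i]
      exact hpoint i
    exact fun x => LinearMap.congr_fun this x
  have hφψ : ∀ A : sl (Fin 2) K, φ (ψ A) = A := by
    intro A
    have htr : A.val 0 0 + A.val 1 1 = 0 := by
      have h : Matrix.trace A.val = 0 := A.2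
      simpa [Matrix.trace, Matrix.diag, Fin.sum_univ_two] using h
    rw [hψ, stmt11psi_apply, map_add, map_add, map_smul, map_smul, map_smul, φu, φv, φw]
    apply Subtype.ext
    show A.val 1 0 • F.val + A.val 0 1 • E.val + (2 * A.val 0 0) • ((2⁻¹:K) • H.val) = A.val
    rw [smul_smul, show 2 * A.val 0 0 * 2⁻¹ = A.val 0 0 by field_simp, hHval, hEval, hFval]
    ext i j
    fin_cases i <;> fin_cases j <;>
      simp [Matrix.mul_apply, Matrix.single, Fin.sum_univ_two]
    linear_combination -htr
  let eqv : L ≃ₗ[K] sl (Fin 2) K :=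
    LinearEquiv.ofLinear φ ψ (LinearMap.ext hφψ) (LinearMap.ext hψφ)
  exact ⟨LieEquiv.ofBijective ⟨φ, key _ _⟩ eqv.bijective⟩

theorem stmt11_nonsolv (K : Type*) [Field K] (h2 : (2 : K) ≠ 0)
    (L : Type*) [LieRing L] [LieAlgebra K L] (u v w : L)
    (hli : LinearIndependent K ![u, v, w])
    (hsp : Submodule.span K {u, v, w} = ⊤)
    (huv : ⁅u, v⁆ = (-2 : K) • w) (huw : ⁅u, w⁆ = u) (hvw : ⁅v, w⁆ = -v) :
    ¬ LieAlgebra.IsSolvable L := by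
  have hune : u ≠ 0 := by
    have := hli.ne_zero 0
    simpa using this
  have hderiv : ∀ k, LieAlgebra.derivedSeries K L k = ⊤ := by
    intro k
    induction k with
    | zero => rfl
    | succ k ih =>
      rw [LieAlgebra.derivedSeries_def, LieAlgebra.derivedSeriesOfIdeal_succ,
        ← LieAlgebra.derivedSeries_def, ih]
      refine le_antisymm le_top ?_
      intro x _
      have hx : x ∈ Submodule.span K {u, v, w} := by rw [hsp]; trivial
      have hsub : Submodule.span K {u, v, w} ≤
          (⁅(⊤ : LieIdeal K L), (⊤ : LieIdeal K L)⁆ : LieIdeal K L) := by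
        rw [Submodule.span_le]
        intro y hy
        simp only [Set.mem_insert_iff, Set.mem_singleton_iff] at hy
        rcases hy with h | h | h
        · rw [h, ← huw]
          exact LieSubmodule.lie_mem_lie trivial trivial
        · rw [h, show v = ⁅v, -w⁆ by rw [lie_neg, hvw, neg_neg]]
          exact LieSubmodule.lie_mem_lie trivial trivial
        · rw [h, show w = ⁅(-2⁻¹ : K) • u, v⁆ by
            rw [smul_lie, huv, smul_smul, show (-2⁻¹ : K) * (-2) = 1 by field_simp, one_smul]]
          exact LieSubmodule.lie_mem_lie trivial trivial
      exact hsub hx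
  intro hs
  obtain ⟨k, hk⟩ := (LieAlgebra.isSolvable_iff K L).mp hs
  rw [hderiv k] at hk
  have : u ∈ (⊥ : LieIdeal K L) := hk ▸ trivial
  exact hune (by simpa using this)

/-- over a field of characteristic ≠ 2, the 3-dimensional Lie algebra with basis
`u, v, w` and brackets `[u,v] = -2w`, `[u,w] = u`, `[v,w] = -v` is isomorphic to `sl(2,K)`;
in particular it is not solvable. -/
theorem stmt_11 (K : Type*) [Field K] (h2 : (2 : K) ≠ 0)
    (L : Type*) [LieRing L] [LieAlgebra K L] (u v w : L)
    (hli : LinearIndependent K ![u, v, w])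
    (hsp : Submodule.span K {u, v, w} = ⊤)
    (huv : ⁅u, v⁆ = (-2 : K) • w) (huw : ⁅u, w⁆ = u) (hvw : ⁅v, w⁆ = -v) :
    Nonempty (L ≃ₗ⁅K⁆ LieAlgebra.SpecialLinear.sl (Fin 2) K) ∧
      ¬ LieAlgebra.IsSolvable L := by
  exact ⟨stmt11_iso K h2 L u v w hli hsp huv huw hvw,
    stmt11_nonsolv K h2 L u v w hli hsp huv huw hvw⟩
end

section
/- Let L be a Lie algebra over a field K that decomposes as a vector space L = Z ⊕ H ⊕ P where Z and P are abelian Lie subalgebras, M := Z ⊕ H is a Lie subalgebra, [M, P] ⊆ P, and [P, P] ⊆ M. If both M and M ⊕ [P,P] are solvable as Lie subalgebras, then L is solvable. -/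
/-- a Lie algebra `L = Z ⊕ H ⊕ P` (as a vector space) with `Z, P` abelian Lie
subalgebras, `M := Z ⊕ H` a Lie subalgebra, `[M,P] ⊆ P`, `[P,P] ⊆ M`, such that `M` and
`M ⊕ [P,P]` are solvable, is itself solvable. -/
theorem stmt_15 (K : Type*) [Field K] (L : Type*) [LieRing L] [LieAlgebra K L]
    (Z M P : LieSubalgebra K L) (H : Submodule K L)
    (hZab : IsLieAbelian Z) (hPab : IsLieAbelian P)
    (hM : M.toSubmodule = Z.toSubmodule ⊔ H)
    (hZH : Z.toSubmodule ⊓ H = ⊥)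
    (hMPdisj : (Z.toSubmodule ⊔ H) ⊓ P.toSubmodule = ⊥)
    (htop : Z.toSubmodule ⊔ H ⊔ P.toSubmodule = ⊤)
    (hMP : ∀ x ∈ M, ∀ y ∈ P, ⁅x, y⁆ ∈ P)
    (hPP : ∀ x ∈ P, ∀ y ∈ P, ⁅x, y⁆ ∈ M)
    (hMsolv : LieAlgebra.IsSolvable M)
    (hN : ∀ N : LieSubalgebra K L,
      N.toSubmodule =
        M.toSubmodule ⊔ Submodule.span K {z : L | ∃ x ∈ P, ∃ y ∈ P, z = ⁅x, y⁆} →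
      LieAlgebra.IsSolvable N) :
    LieAlgebra.IsSolvable L := by
  classical
  -- P is abelian: brackets of elements of P vanish in L
  have habP : ∀ p ∈ P, ∀ q ∈ P, ⁅p, q⁆ = (0 : L) := by
    intro p hp q hq
    have h : ⁅(⟨p, hp⟩ : P), (⟨q, hq⟩ : P)⁆ = 0 := trivial_lie_zero _ _ _ _
    exact congrArg Subtype.val h
  -- decomposition of any element of L
  have hdecomp : ∀ x : L, ∃ m ∈ M, ∃ p ∈ P, x = m + p := by
    intro x
    have hx : x ∈ Z.toSubmodule ⊔ H ⊔ P.toSubmodule := htop ▸ Submodule.mem_top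
    rw [← hM] at hx
    obtain ⟨m, hm, p, hp, rfl⟩ := Submodule.mem_sup.mp hx
    exact ⟨m, hm, p, hp, rfl⟩
  -- P's carrier is a Lie ideal
  set I : LieIdeal K L :=
    { P.toSubmodule with
      lie_mem := by
        intro x y hy
        obtain ⟨m, hm, p, hp, rfl⟩ := hdecomp x
        have h1 : ⁅m, y⁆ ∈ P := hMP m hm y hy
        have h2 : ⁅p, y⁆ = (0 : L) := habP p hp y hy
        have : ⁅m + p, y⁆ = ⁅m, y⁆ + ⁅p, y⁆ := add_lie m p y
        rw [this, h2, add_zero]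
        exact h1 } with hIdef
  have hmemI : ∀ x : L, x ∈ I ↔ x ∈ P := fun x => Iff.rfl
  -- I is solvable at level 1
  have hI1 : LieAlgebra.derivedSeriesOfIdeal K L 1 I = ⊥ := by
    rw [LieAlgebra.derivedSeriesOfIdeal_succ, LieAlgebra.derivedSeriesOfIdeal_zero,
      LieSubmodule.lie_eq_bot_iff]
    intro x hx m hm
    exact habP x hx m hm
  -- quotient map as a Lie hom
  let q : L →ₗ⁅K⁆ L ⧸ I :=
    { toLinearMap := (LieSubmodule.Quotient.mk' I : L →ₗ⁅K,L⁆ L ⧸ I).toLinearMap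
      map_lie' := by intro x y; rfl }
  have hqsurj : Function.Surjective q := LieSubmodule.Quotient.surjective_mk' I
  -- composition M → L → L⧸I is surjective
  let g : M →ₗ⁅K⁆ L ⧸ I := q.comp M.incl
  have hgsurj : Function.Surjective g := by
    intro c
    obtain ⟨x, rfl⟩ := hqsurj c
    obtain ⟨m, hm, p, hp, rfl⟩ := hdecomp x
    refine ⟨⟨m, hm⟩, ?_⟩
    show q m = q (m + p)
    have : q p = 0 := by
      rw [show (q p = 0) ↔ p ∈ I from LieSubmodule.Quotient.mk_eq_zero I]
      exact hp
    rw [map_add, this, add_zero]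
  have hquot : LieAlgebra.IsSolvable (L ⧸ I) := hgsurj.lieAlgebra_isSolvable
  obtain ⟨n, hn⟩ := LieAlgebra.IsSolvable.solvable K (L ⧸ I)
  -- derivedSeries K L n ≤ I
  have hle : LieAlgebra.derivedSeries K L n ≤ I := by
    have hmap := LieIdeal.derivedSeries_map_eq (f := q) n hqsurj
    rw [hn] at hmap
    rw [LieIdeal.map_eq_bot_iff] at hmap
    have hker : q.ker = I := by
      ext x
      rw [LieHom.mem_ker]
      exact LieSubmodule.Quotient.mk_eq_zero I
    rwa [hker] at hmap
  refine LieAlgebra.IsSolvable.mk (R := K) (k := n + 1) ?_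
  have : LieAlgebra.derivedSeries K L (1 + n) ≤ LieAlgebra.derivedSeriesOfIdeal K L 1 I := by
    rw [LieAlgebra.derivedSeries_def, LieAlgebra.derivedSeriesOfIdeal_add]
    exact LieAlgebra.derivedSeriesOfIdeal_mono hle 1
  rw [hI1] at this
  rw [le_bot_iff] at this
  rwa [add_comm] at this
end
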